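/- Let g be a 4-dimensional unimodular Lie algebra of the form n ⋊ ℝ where n is the 3-dimensional Heisenberg algebra (basis X,Y,Z with [Y,Z] = -X) and n = [g,g]. Then, after a change of basis, the action of the generator W satisfies either (ad_W X = 0, ad_W Y = -Z, ad_W Z = Y) or (ad_W X = 0, ad_W Y = Y, ad_W Z = -Z). -/

import Mathlib

theorem stmt15_range4 {M : Type*} (a b c d : M) :
    Set.range ![a,b,c,d] = {a,b,c,d} := by
  ext v
  simp only [Set.mem_range, Fin.exists_fin_succ, Fin.cons_succ, Matrix.cons_val_zero,
    Matrix.cons_val_succ, Set.mem_insert_iff, Set.mem_singleton_iff]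
  constructor
  · rintro (h|h|h|h|⟨⟨i,hi⟩⟩)
    · exact Or.inl h.symm
    · exact Or.inr (Or.inl h.symm)
    · exact Or.inr (Or.inr (Or.inl h.symm))
    · exact Or.inr (Or.inr (Or.inr h.symm))
    · exact absurd i.2 (by omega)
  · rintro (h|h|h|h)
    · exact Or.inl h.symm
    · exact Or.inr (Or.inl h.symm)
    · exact Or.inr (Or.inr (Or.inl h.symm))
    · exact Or.inr (Or.inr (Or.inr (Or.inl h.symm)))

/-- Let `g` be a 4-dimensional unimodular Lie algebra of the form `n ⋊ ℝ·W`,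
where `n = span{X,Y,Z}` is the 3-dimensional Heisenberg algebra
(`[Y,Z] = -X`) and `n = [g,g]`.  Then, after a change of basis, the action of
the generator `W` satisfies either `ad_W X = 0, ad_W Y = -Z, ad_W Z = Y` or
`ad_W X = 0, ad_W Y = Y, ad_W Z = -Z`. -/
theorem stmt15 (g : Type*) [LieRing g] [LieAlgebra ℝ g] [Module.Finite ℝ g]
    (X Y Z W : g)
    (hindep : LinearIndependent ℝ ![X, Y, Z, W])
    (hspan : Submodule.span ℝ {X, Y, Z, W} = ⊤)
    (hXY : ⁅X, Y⁆ = 0) (hXZ : ⁅X, Z⁆ = 0) (hYZ : ⁅Y, Z⁆ = -X)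
    (hWX : ⁅W, X⁆ ∈ Submodule.span ℝ ({X, Y, Z} : Set g))
    (hWY : ⁅W, Y⁆ ∈ Submodule.span ℝ ({X, Y, Z} : Set g))
    (hWZ : ⁅W, Z⁆ ∈ Submodule.span ℝ ({X, Y, Z} : Set g))
    (hderived :
      (⁅(⊤ : LieIdeal ℝ g), (⊤ : LieIdeal ℝ g)⁆ : LieIdeal ℝ g).toSubmodule =
        Submodule.span ℝ ({X, Y, Z} : Set g))
    (hunimod : ∀ v : g, LinearMap.trace ℝ g (LieAlgebra.ad ℝ g v) = 0) :
    ∃ X' Y' Z' W' : g,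
      LinearIndependent ℝ ![X', Y', Z', W'] ∧
      Submodule.span ℝ {X', Y', Z', W'} = ⊤ ∧
      ⁅X', Y'⁆ = 0 ∧ ⁅X', Z'⁆ = 0 ∧ ⁅Y', Z'⁆ = -X' ∧ ⁅W', X'⁆ = 0 ∧
      ((⁅W', Y'⁆ = -Z' ∧ ⁅W', Z'⁆ = Y') ∨ (⁅W', Y'⁆ = Y' ∧ ⁅W', Z'⁆ = -Z')) := by
  classical
  -- coefficient extraction from linear independence
  have hcoef : ∀ α β γ δ : ℝ, α•X+β•Y+γ•Z+δ•W = 0 → α=0 ∧ β=0 ∧ γ=0 ∧ δ=0 := by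
    intro α β γ δ h
    have key := Fintype.linearIndependent_iff.mp hindep ![α,β,γ,δ]
      (by simpa [Fin.sum_univ_four, add_assoc] using h)
    exact ⟨key 0, key 1, key 2, key 3⟩
  -- expressing members of the nilradical
  have mem3 : ∀ v : g, v ∈ Submodule.span ℝ ({X,Y,Z} : Set g) →
      ∃ α β γ : ℝ, v = α•X+β•Y+γ•Z := by
    intro v hv
    rw [Submodule.mem_span_insert] at hv
    obtain ⟨α, w, hw, rfl⟩ := hv
    rw [Submodule.mem_span_insert] at hw
    obtain ⟨β, u, hu, rfl⟩ := hw
    rw [Submodule.mem_span_singleton] at hu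
    obtain ⟨γ, rfl⟩ := hu
    exact ⟨α, β, γ, by abel⟩
  obtain ⟨a1,a2,a3, hWXe⟩ := mem3 _ hWX
  obtain ⟨b1,b2,b3, hWYe⟩ := mem3 _ hWY
  obtain ⟨c1,c2,c3, hWZe⟩ := mem3 _ hWZ
  have hYX : ⁅Y,X⁆ = 0 := by rw [← lie_skew, hXY, neg_zero]
  have hZX : ⁅Z,X⁆ = 0 := by rw [← lie_skew, hXZ, neg_zero]
  have hZY : ⁅Z,Y⁆ = X := by rw [← lie_skew, hYZ, neg_neg]
  -- Jacobi identities
  have j1 := leibniz_lie W X Y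
  rw [hXY, hWXe, hWYe] at j1
  simp only [lie_zero, add_lie, smul_lie, lie_add, lie_smul, hXY, hXZ, hYX, hZY, lie_self,
    smul_zero, zero_add, add_zero] at j1
  have j2 := leibniz_lie W X Z
  rw [hXZ, hWXe, hWZe] at j2
  simp only [lie_zero, add_lie, smul_lie, lie_add, lie_smul, hXY, hXZ, hYZ, hZX, lie_self,
    smul_zero, zero_add, add_zero, smul_neg] at j2
  have j3 := leibniz_lie W Y Z
  rw [hYZ, lie_neg, hWXe, hWYe, hWZe] at j3
  simp only [add_lie, smul_lie, lie_add, lie_smul, hXY, hXZ, hYZ, hZY, hYX,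
    hZX, lie_self, smul_zero, zero_add, add_zero, smul_neg, neg_add] at j3
  have ha3 : a3 = 0 := by
    refine (hcoef a3 0 0 0 ?_).1
    linear_combination (norm := module) j1.symm
  have ha2 : a2 = 0 := by
    refine (hcoef a2 0 0 0 ?_).1
    linear_combination (norm := module) -j2.symm
  have hj3 : b2 + c3 - a1 = 0 := by
    refine (hcoef (b2+c3-a1) (-a2) (-a3) 0 ?_).1
    linear_combination (norm := module) j3
  have hWXe' : ⁅W, X⁆ = a1 • X := by
    rw [hWXe, ha2, ha3, zero_smul, zero_smul, add_zero, add_zero]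
  -- unimodularity: trace of ad W is zero
  have hsp' : ⊤ ≤ Submodule.span ℝ (Set.range ![X,Y,Z,W]) := by
    rw [stmt15_range4, hspan]
  have htrace : a1 + b2 + c3 = 0 := by
    let b : Module.Basis (Fin 4) ℝ g := Module.Basis.mk hindep hsp'
    have hb0 : b 0 = X := by simp [b, Module.Basis.coe_mk]
    have hb1 : b 1 = Y := by simp [b, Module.Basis.coe_mk]
    have hb2 : b 2 = Z := by simp [b, Module.Basis.coe_mk]
    have hb3 : b 3 = W := by simp [b, Module.Basis.coe_mk]
    have hrX : b.repr X = Finsupp.single 0 1 := by rw [← hb0, b.repr_self]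
    have hrY : b.repr Y = Finsupp.single 1 1 := by rw [← hb1, b.repr_self]
    have hrZ : b.repr Z = Finsupp.single 2 1 := by rw [← hb2, b.repr_self]
    have htr := hunimod W
    rw [LinearMap.trace_eq_matrix_trace ℝ b, Matrix.trace] at htr
    simp only [Fin.sum_univ_four, Matrix.diag_apply, LinearMap.toMatrix_apply,
      LieAlgebra.ad_apply, hb0, hb1, hb2, hb3, hWXe', hWYe, hWZe, lie_self, map_add, map_smul,
      map_zero, hrX, hrY, hrZ, Finsupp.coe_add, Finsupp.coe_smul, Pi.add_apply, Pi.smul_apply,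
      Finsupp.single_apply, Finsupp.coe_zero, Pi.zero_apply] at htr
    norm_num [Fin.ext_iff] at htr
    linarith
  have ha1 : a1 = 0 := by linarith
  have hc3 : c3 = -b2 := by linarith
  have hWX0 : ⁅W, X⁆ = 0 := by rw [hWXe', ha1, zero_smul]
  -- the derived algebra condition forces the 2x2 block to be invertible
  have hdet : b2 * c3 - b3 * c2 ≠ 0 := by
    set S : Submodule ℝ g := Submodule.span ℝ ({X, ⁅W,Y⁆, ⁅W,Z⁆} : Set g) with hS
    have hXS : X ∈ S := Submodule.subset_span (by simp)
    have hWYS : ⁅W,Y⁆ ∈ S := Submodule.subset_span (by simp)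
    have hWZS : ⁅W,Z⁆ ∈ S := Submodule.subset_span (by simp)
    have hbase : ∀ u v : g, ⁅u, v⁆ ∈ S := by
      have hgen : ∀ u ∈ ({X,Y,Z,W} : Set g), ∀ v ∈ ({X,Y,Z,W} : Set g), ⁅u,v⁆ ∈ S := by
        intro u hu v hv
        simp only [Set.mem_insert_iff, Set.mem_singleton_iff] at hu hv
        have skew : ∀ x y : g, ⁅x,y⁆ ∈ S → ⁅y,x⁆ ∈ S := fun x y h => by
          rw [← lie_skew]; exact neg_mem h
        have hWXS : ⁅W,X⁆ ∈ S := by rw [hWX0]; exact zero_mem S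
        rcases hu with rfl|rfl|rfl|rfl <;> rcases hv with rfl|rfl|rfl|rfl
        · rw [lie_self]; exact zero_mem S
        · rw [hXY]; exact zero_mem S
        · rw [hXZ]; exact zero_mem S
        · exact skew _ _ hWXS
        · rw [hYX]; exact zero_mem S
        · rw [lie_self]; exact zero_mem S
        · rw [hYZ]; exact neg_mem hXS
        · exact skew _ _ hWYS
        · rw [hZX]; exact zero_mem S
        · rw [hZY]; exact hXS
        · rw [lie_self]; exact zero_mem S
        · exact skew _ _ hWZS
        · exact hWXS
        · exact hWYS
        · exact hWZS
        · rw [lie_self]; exact zero_mem S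
      intro u v
      have hu : u ∈ Submodule.span ℝ ({X,Y,Z,W} : Set g) := by rw [hspan]; trivial
      have hv : v ∈ Submodule.span ℝ ({X,Y,Z,W} : Set g) := by rw [hspan]; trivial
      induction hu using Submodule.span_induction with
      | mem u hu =>
        induction hv using Submodule.span_induction with
        | mem v hv => exact hgen u hu v hv
        | zero => simp only [lie_zero]; exact zero_mem S
        | add x y _ _ hx hy => rw [lie_add]; exact add_mem hx hy
        | smul t x _ hx => rw [lie_smul]; exact Submodule.smul_mem _ _ hx
      | zero => simp only [zero_lie]; exact zero_mem S
      | add x y _ _ hx hy => rw [add_lie]; exact add_mem hx hy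
      | smul t x _ hx => rw [smul_lie]; exact Submodule.smul_mem _ _ hx
    have hle : Submodule.span ℝ ({X, Y, Z} : Set g) ≤ S := by
      rw [← hderived, LieSubmodule.lieIdeal_oper_eq_linear_span']
      refine Submodule.span_le.mpr ?_
      rintro x ⟨m, -, n, -, rfl⟩
      exact hbase m n
    have memS : ∀ v : g, v ∈ S → ∃ α β γ : ℝ, v = α•X + β•⁅W,Y⁆ + γ•⁅W,Z⁆ := by
      intro v hv
      rw [hS, Submodule.mem_span_insert] at hv
      obtain ⟨α, w, hw, rfl⟩ := hv
      rw [Submodule.mem_span_insert] at hw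
      obtain ⟨β, u, hu, rfl⟩ := hw
      rw [Submodule.mem_span_singleton] at hu
      obtain ⟨γ, rfl⟩ := hu
      exact ⟨α, β, γ, by abel⟩
    obtain ⟨α, β, γ, hYe⟩ := memS Y (hle (Submodule.subset_span (by simp)))
    obtain ⟨α', β', γ', hZe⟩ := memS Z (hle (Submodule.subset_span (by simp)))
    rw [hWYe, hWZe] at hYe hZe
    have e1 : (α + β*b1 + γ*c1) • X + (β*b2 + γ*c2 - 1) • Y + (β*b3 + γ*c3) • Z
        + (0:ℝ) • W = 0 := by
      linear_combination (norm := module) hYe.symm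
    have e2 : (α' + β'*b1 + γ'*c1) • X + (β'*b2 + γ'*c2) • Y + (β'*b3 + γ'*c3 - 1) • Z
        + (0:ℝ) • W = 0 := by
      linear_combination (norm := module) hZe.symm
    obtain ⟨-, f1, f2, -⟩ := hcoef _ _ _ _ e1
    obtain ⟨-, f3, f4, -⟩ := hcoef _ _ _ _ e2
    intro hd
    have key : (b2*c3 - b3*c2) * (β*γ' - γ*β') = 1 := by
      linear_combination (β'*b3+γ'*c3)*f1 + f4 - (β'*b2+γ'*c2)*f2
    rw [hd, zero_mul] at key
    norm_num at key
  have hδ : b2^2 + b3*c2 ≠ 0 := by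
    intro h
    exact hdet (by rw [hc3]; linear_combination -h)
  -- the adjusted generator
  set W₀ : g := W + c1 • Y - b1 • Z with hW₀
  have hW0X : ⁅W₀, X⁆ = 0 := by
    rw [hW₀, sub_lie, add_lie, smul_lie, smul_lie, hWX0, hYX, hZX]
    simp
  have hW0Y : ⁅W₀, Y⁆ = b2 • Y + b3 • Z := by
    rw [hW₀, sub_lie, add_lie, smul_lie, smul_lie, hWYe, lie_self, hZY]
    module
  have hW0Z : ⁅W₀, Z⁆ = c2 • Y + (-b2) • Z := by
    rw [hW₀, sub_lie, add_lie, smul_lie, smul_lie, hWZe, lie_self, hYZ, hc3]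
    module
  -- the generic construction
  have main : ∀ p q r s t : ℝ, t ≠ 0 → p*s - q*r ≠ 0 →
      LinearIndependent ℝ ![(p*s-q*r) • X, p•Y+q•Z, r•Y+s•Z, t⁻¹ • W₀] ∧
      Submodule.span ℝ {(p*s-q*r) • X, p•Y+q•Z, r•Y+s•Z, t⁻¹ • W₀} = ⊤ ∧
      ⁅(p*s-q*r) • X, p•Y+q•Z⁆ = 0 ∧ ⁅(p*s-q*r) • X, r•Y+s•Z⁆ = 0 ∧
      ⁅p•Y+q•Z, r•Y+s•Z⁆ = -((p*s-q*r) • X) ∧ ⁅t⁻¹ • W₀, (p*s-q*r) • X⁆ = 0 := by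
    intro p q r s t ht hk
    set X' : g := (p*s-q*r) • X with hX'
    set Y' : g := p•Y+q•Z with hY'
    set Z' : g := r•Y+s•Z with hZ'
    set W' : g := t⁻¹ • W₀ with hW'
    set P : Submodule ℝ g := Submodule.span ℝ {X', Y', Z', W'} with hP
    have hX'P : X' ∈ P := Submodule.subset_span (by simp)
    have hY'P : Y' ∈ P := Submodule.subset_span (by simp)
    have hZ'P : Z' ∈ P := Submodule.subset_span (by simp)
    have hW'P : W' ∈ P := Submodule.subset_span (by simp)
    have hXP : X ∈ P := by
      have : X = (p*s-q*r)⁻¹ • X' := by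
        rw [hX', smul_smul, inv_mul_cancel₀ hk, one_smul]
      rw [this]; exact Submodule.smul_mem _ _ hX'P
    have hYP : Y ∈ P := by
      have : Y = (p*s-q*r)⁻¹ • (s • Y' - q • Z') := by
        rw [hY', hZ']
        match_scalars <;> field_simp <;> ring
      rw [this]
      exact Submodule.smul_mem _ _
        (sub_mem (Submodule.smul_mem _ _ hY'P) (Submodule.smul_mem _ _ hZ'P))
    have hZP : Z ∈ P := by
      have : Z = (p*s-q*r)⁻¹ • (p • Z' - r • Y') := by
        rw [hY', hZ']
        match_scalars <;> field_simp <;> ring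
      rw [this]
      exact Submodule.smul_mem _ _
        (sub_mem (Submodule.smul_mem _ _ hZ'P) (Submodule.smul_mem _ _ hY'P))
    have hWP : W ∈ P := by
      have : W = t • W' - c1 • Y + b1 • Z := by
        rw [hW', smul_smul, mul_inv_cancel₀ ht, one_smul, hW₀]; abel
      rw [this]
      exact add_mem (sub_mem (Submodule.smul_mem _ _ hW'P) (Submodule.smul_mem _ _ hYP))
        (Submodule.smul_mem _ _ hZP)
    have htop : P = ⊤ := by
      rw [eq_top_iff, ← hspan]
      refine Submodule.span_le.mpr ?_
      intro v hv
      simp only [Set.mem_insert_iff, Set.mem_singleton_iff] at hv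
      rcases hv with rfl|rfl|rfl|rfl
      exacts [hXP, hYP, hZP, hWP]
    have hfr : Module.finrank ℝ g = 4 := by
      rw [Module.finrank_eq_card_basis (Module.Basis.mk hindep hsp')]
      simp
    have hli : LinearIndependent ℝ ![X', Y', Z', W'] := by
      apply linearIndependent_of_top_le_span_of_card_eq_finrank
      · rw [stmt15_range4]; exact htop.ge
      · simp [hfr]
    refine ⟨hli, htop, ?_, ?_, ?_, ?_⟩
    · rw [hX', hY']; simp [lie_add, lie_smul, smul_lie, hXY, hXZ]
    · rw [hX', hZ']; simp [lie_add, lie_smul, smul_lie, hXY, hXZ]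
    · rw [hX', hY', hZ']
      simp only [add_lie, lie_add, smul_lie, lie_smul, lie_self, hYZ, hZY, smul_zero, add_zero,
        zero_add, smul_neg]
      module
    · rw [hW', hX']; simp [lie_smul, smul_lie, hW0X]
  -- case analysis on the determinant
  rcases lt_or_gt_of_ne hδ with hneg | hpos
  · -- rotation case
    set μ : ℝ := Real.sqrt (-(b2^2 + b3*c2)) with hμ
    have hμ2 : μ^2 = -(b2^2 + b3*c2) := Real.sq_sqrt (by linarith)
    have hμpos : 0 < μ := Real.sqrt_pos.mpr (by linarith)
    have hμne : μ ≠ 0 := ne_of_gt hμpos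
    have hb3 : b3 ≠ 0 := by
      intro h
      rw [h] at hneg
      nlinarith
    have hk : μ*(-b3) - 0*(-b2) ≠ 0 := by
      simp only [zero_mul, sub_zero]
      exact mul_ne_zero hμne (neg_ne_zero.mpr hb3)
    obtain ⟨hli, htop, hc1', hc2', hc3', hc4'⟩ := main μ 0 (-b2) (-b3) μ hμne hk
    refine ⟨(μ*(-b3) - 0*(-b2)) • X, μ•Y+(0:ℝ)•Z, (-b2)•Y+(-b3)•Z, μ⁻¹ • W₀,
      hli, htop, hc1', hc2', hc3', hc4', Or.inl ⟨?_, ?_⟩⟩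
    · rw [smul_lie, lie_add, lie_smul, lie_smul, hW0Y, hW0Z]
      match_scalars <;> field_simp <;> ring
    · rw [smul_lie, lie_add, lie_smul, lie_smul, hW0Y, hW0Z]
      match_scalars
      · field_simp
        linear_combination -hμ2
      · field_simp <;> ring
  · -- real eigenvalue case
    by_cases hb3 : b3 = 0
    · -- diagonal with t = b2
      have hb2 : b2 ≠ 0 := by
        intro h
        rw [h, hb3] at hδ
        simp at hδ
      have hk : (1:ℝ)*(-2*b2) - 0*c2 ≠ 0 := by
        simp only [one_mul, zero_mul, sub_zero]
        intro h
        apply hb2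
        linarith
      obtain ⟨hli, htop, hc1', hc2', hc3', hc4'⟩ := main 1 0 c2 (-2*b2) b2 hb2 hk
      refine ⟨((1:ℝ)*(-2*b2) - 0*c2) • X, (1:ℝ)•Y+(0:ℝ)•Z, c2•Y+(-2*b2)•Z, b2⁻¹ • W₀,
        hli, htop, hc1', hc2', hc3', hc4', Or.inr ⟨?_, ?_⟩⟩
      · rw [smul_lie, lie_add, lie_smul, lie_smul, hW0Y, hW0Z]
        match_scalars
        · field_simp
          ring
        · field_simp
          linear_combination hb3
      · rw [smul_lie, lie_add, lie_smul, lie_smul, hW0Y, hW0Z]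
        match_scalars
        · field_simp
          ring
        · field_simp
          linear_combination c2*hb3
    · -- generic with t = sqrt δ
      set t : ℝ := Real.sqrt (b2^2 + b3*c2) with ht
      have ht2 : t^2 = b2^2 + b3*c2 := Real.sq_sqrt (by linarith)
      have htpos : 0 < t := Real.sqrt_pos.mpr (by linarith)
      have htne : t ≠ 0 := ne_of_gt htpos
      have hk : (b2+t)*b3 - b3*(b2-t) ≠ 0 := by
        intro h
        apply hb3
        have h2 : 2*t*b3 = 0 := by linarith [h]
        rcases mul_eq_zero.mp h2 with h3 | h3
        · exact absurd h3 (by positivity)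
        · exact h3
      obtain ⟨hli, htop, hc1', hc2', hc3', hc4'⟩ := main (b2+t) b3 (b2-t) b3 t htne hk
      refine ⟨((b2+t)*b3 - b3*(b2-t)) • X, (b2+t)•Y+b3•Z, (b2-t)•Y+b3•Z, t⁻¹ • W₀,
        hli, htop, hc1', hc2', hc3', hc4', Or.inr ⟨?_, ?_⟩⟩
      · rw [smul_lie, lie_add, lie_smul, lie_smul, hW0Y, hW0Z]
        match_scalars
        · field_simp
          linear_combination -ht2
        · field_simp
          ring
      · rw [smul_lie, lie_add, lie_smul, lie_smul, hW0Y, hW0Z]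
        match_scalars
        · field_simp
          linear_combination -ht2
        · field_simp
          ring
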